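/- Let ω₀, ω₁ ∈ ℝ with ω₀ > 0, ω₁ > 0, and ω₀·ω₁ ≤ 4, and let ρ̆ : ℝ → ℝ be the CLU activation: ρ̆(x) = -ω₀/2 + ω₀/(1 + exp(-ω₁·x)) if x < 0 and ρ̆(x) = x if x ≥ 0. Then ρ̆ is convex on all of ℝ, i.e. ConvexOn ℝ Set.univ ρ̆. -/

import Mathlib

/-- For `ω₀ > 0`, `ω₁ > 0` with `ω₀·ω₁ ≤ 4`, the CLU activation is convex on all
of `ℝ`. -/
theorem clu_convexOn_univ (ω₀ ω₁ : ℝ) (h₀ : 0 < ω₀) (h₁ : 0 < ω₁)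
    (h₄ : ω₀ * ω₁ ≤ 4)
    (ρ : ℝ → ℝ)
    (hρ : ∀ x, ρ x =
      if x < 0 then -ω₀ / 2 + ω₀ / (1 + Real.exp (-ω₁ * x)) else x) :
    ConvexOn ℝ Set.univ ρ := by
  set g : ℝ → ℝ := fun x => -ω₀ / 2 + ω₀ / (1 + Real.exp (-ω₁ * x)) with hg
  set D : ℝ → ℝ := fun x =>
    ω₀ * ω₁ * Real.exp (-ω₁ * x) / (1 + Real.exp (-ω₁ * x)) ^ 2 with hD
  have hden : ∀ x : ℝ, (0:ℝ) < 1 + Real.exp (-ω₁ * x) := fun x => by positivity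
  -- derivative of g
  have hderiv : ∀ x : ℝ, HasDerivAt g (D x) x := by
    intro x
    have he : HasDerivAt (fun x : ℝ => Real.exp (-ω₁ * x))
        (Real.exp (-ω₁ * x) * (-ω₁ * 1)) x :=
      ((hasDerivAt_id x).const_mul (-ω₁)).exp
    have hd : HasDerivAt (fun x : ℝ => ω₀ / (1 + Real.exp (-ω₁ * x)))
        ((0 * (1 + Real.exp (-ω₁ * x)) -
          ω₀ * (0 + Real.exp (-ω₁ * x) * (-ω₁ * 1))) / (1 + Real.exp (-ω₁ * x)) ^ 2) x :=
      (hasDerivAt_const x ω₀).div ((hasDerivAt_const x 1).add he) (ne_of_gt (hden x))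
    have h := (hasDerivAt_const x (-ω₀ / 2)).add hd
    refine h.congr_deriv ?_
    simp only [hD]
    ring
  -- the derivative is bounded by 1
  have hDle1 : ∀ x : ℝ, D x ≤ 1 := by
    intro x
    rw [hD]
    rw [div_le_one (by positivity)]
    have hE := Real.exp_pos (-ω₁ * x)
    nlinarith [sq_nonneg (1 - Real.exp (-ω₁ * x)),
      mul_le_mul_of_nonneg_right h₄ hE.le]
  -- g is convex on Iic 0
  have hgconv : ConvexOn ℝ (Set.Iic (0:ℝ)) g := by
    apply MonotoneOn.convexOn_of_deriv (convex_Iic 0)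
    · exact fun x _ => (hderiv x).continuousAt.continuousWithinAt
    · exact fun x _ => (hderiv x).differentiableAt.differentiableWithinAt
    · rw [interior_Iic]
      intro a ha b hb hab
      rw [(hderiv a).deriv, (hderiv b).deriv, hD]
      simp only
      set A := Real.exp (-ω₁ * a) with hA
      set B := Real.exp (-ω₁ * b) with hB
      have hApos : (0:ℝ) < A := Real.exp_pos _
      have hBpos : (0:ℝ) < B := Real.exp_pos _
      have hB1 : (1:ℝ) < B := by
        rw [hB, show (1:ℝ) = Real.exp 0 by simp]
        exact Real.exp_lt_exp.2 (by nlinarith [Set.mem_Iio.1 hb])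
      have hBA : B ≤ A := Real.exp_le_exp.2 (by nlinarith)
      rw [div_le_div_iff₀ (by positivity) (by positivity)]
      nlinarith [mul_nonneg (mul_nonneg (mul_pos h₀ h₁).le (sub_nonneg.2 hBA))
        (sub_nonneg.2 (one_le_mul_of_one_le_of_one_le hB1.le (hB1.trans_le hBA).le))]
  have g0 : g 0 = 0 := by
    simp [hg]
    ring
  -- g lies above the identity on negatives
  have hge : ∀ a : ℝ, a < 0 → a ≤ g a := by
    intro a ha
    obtain ⟨c, _, hc⟩ := exists_hasDerivAt_eq_slope g D ha
      (fun t _ => (hderiv t).continuousAt.continuousWithinAt) (fun t _ => hderiv t)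
    have h1 : (g 0 - g a) / (0 - a) ≤ 1 := hc ▸ hDle1 c
    rw [g0, div_le_one (by linarith)] at h1
    linarith
  -- values of ρ
  have hρg : ∀ t : ℝ, t ≤ 0 → ρ t = g t := by
    intro t ht
    rcases lt_or_eq_of_le ht with h | h
    · rw [hρ t, if_pos h]
    · subst h
      rw [hρ 0, if_neg (lt_irrefl 0), g0]
  have hρpos : ∀ t : ℝ, 0 ≤ t → ρ t = t := by
    intro t ht
    rw [hρ t, if_neg (not_lt.2 ht)]
  -- main slope argument
  apply convexOn_of_slope_mono_adjacent convex_univ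
  intro x y z _ _ hxy hyz
  by_cases hz0 : z ≤ 0
  · rw [hρg x (by linarith), hρg y (by linarith), hρg z hz0]
    exact hgconv.slope_mono_adjacent (Set.mem_Iic.2 (by linarith))
      (Set.mem_Iic.2 hz0) hxy hyz
  by_cases hx0 : 0 ≤ x
  · rw [hρpos x hx0, hρpos y (by linarith), hρpos z (by linarith),
      div_self (by linarith : y - x ≠ 0), div_self (by linarith : z - y ≠ 0)]
  push_neg at hz0 hx0
  rcases lt_trichotomy y 0 with hy | hy | hy
  · -- x < y < 0 < z
    have h1 : (g y - g x) / (y - x) ≤ (g 0 - g y) / (0 - y) :=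
      hgconv.slope_mono_adjacent (Set.mem_Iic.2 hx0.le) (Set.mem_Iic.2 le_rfl) hxy hy
    rw [g0] at h1
    have h2 : y ≤ g y := hge y hy
    have h3 : (0 - g y) / (0 - y) ≤ (z - g y) / (z - y) := by
      rw [div_le_div_iff₀ (by linarith) (by linarith)]
      nlinarith [mul_le_mul_of_nonneg_left h2 hz0.le]
    rw [hρg x hx0.le, hρg y hy.le, hρpos z hz0.le]
    exact le_trans h1 h3
  · -- y = 0
    subst hy
    rw [hρg x hx0.le, hρg 0 le_rfl, hρpos z hz0.le, g0,
      div_le_div_iff₀ (by linarith) (by linarith)]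
    nlinarith [hge x hx0]
  · -- 0 < y
    rw [hρg x hx0.le, hρpos y hy.le, hρpos z hz0.le,
      div_self (by linarith : z - y ≠ 0), div_le_one (by linarith : (0:ℝ) < y - x)]
    nlinarith [hge x hx0]
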